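/- arXiv:0706.3623 — 2 statements merged into one kernel-verified Lean document; each statement's English description precedes it below -/
import Mathlib

section
/- Let Γ be a group, H a complex inner product space, and ξ, η : Γ → H functions with ‖ξ(a)‖ ≤ 1 and ‖η(b)‖ ≤ 1 for all a, b ∈ Γ. Let f : Γ → ℂ be a function satisfying f(a b⁻¹) = ⟨η(b), ξ(a)⟩ for all a, b ∈ Γ. Then for every g, a ∈ Γ one has ‖ξ(g a) − ξ(a)‖² ≤ 2(2 − 2 Re f(g)) + 2(2 − 2 Re f(1)). -/
open scoped InnerProductSpace

lemma norm_sub_sq_le_aux {H : Type*} [NormedAddCommGroup H] [InnerProductSpace ℂ H]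
    (u v : H) (hu : ‖u‖ ≤ 1) (hv : ‖v‖ ≤ 1) :
    ‖u - v‖ ^ 2 ≤ 2 - 2 * (inner ℂ v u : ℂ).re := by
  have h := norm_sub_sq (𝕜 := ℂ) u v
  have h1 : ‖u‖ ^ 2 ≤ 1 := by nlinarith [norm_nonneg u]
  have h2 : ‖v‖ ^ 2 ≤ 1 := by nlinarith [norm_nonneg v]
  have hre : RCLike.re (inner ℂ u v : ℂ) = (inner ℂ v u : ℂ).re := by
    rw [inner_re_symm]; simp [RCLike.re_to_complex]
  rw [h, hre]
  linarith

lemma two_two_ineq {H : Type*} [NormedAddCommGroup H] (u v w : H) :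
    ‖u - w‖ ^ 2 ≤ 2 * ‖u - v‖ ^ 2 + 2 * ‖v - w‖ ^ 2 := by
  have h : ‖u - w‖ ≤ ‖u - v‖ + ‖v - w‖ := norm_sub_le_norm_sub_add_norm_sub u v w
  nlinarith [norm_nonneg (u - v), norm_nonneg (v - w), norm_nonneg (u - w), sq_nonneg (‖u - v‖ - ‖v - w‖), sq_nonneg (‖u - v‖ + ‖v - w‖)]

/-- Let `Γ` be a group, `H` a complex inner product space, and `ξ, η : Γ → H`
with `‖ξ a‖ ≤ 1`, `‖η b‖ ≤ 1` for all `a, b`. Let `f : Γ → ℂ` satisfy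
`f (a * b⁻¹) = ⟪η b, ξ a⟫` for all `a, b`. Then for all `g, a`,
`‖ξ (g * a) − ξ a‖² ≤ 2 (2 − 2 Re f g) + 2 (2 − 2 Re f 1)`. -/
theorem bozejko_fendler_estimate {Γ : Type*} [Group Γ]
    {H : Type*} [NormedAddCommGroup H] [InnerProductSpace ℂ H]
    (ξ η : Γ → H) (hξ : ∀ a, ‖ξ a‖ ≤ 1) (hη : ∀ b, ‖η b‖ ≤ 1)
    (f : Γ → ℂ) (hf : ∀ a b : Γ, f (a * b⁻¹) = inner ℂ (η b) (ξ a))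
    (g a : Γ) :
    ‖ξ (g * a) - ξ a‖ ^ 2 ≤
      2 * (2 - 2 * (f g).re) + 2 * (2 - 2 * (f 1).re) := by
  have h1 : ‖ξ (g * a) - η a‖ ^ 2 ≤ 2 - 2 * (f g).re := by
    have := norm_sub_sq_le_aux (ξ (g * a)) (η a) (hξ _) (hη _)
    have hfg : f g = inner ℂ (η a) (ξ (g * a)) := by
      have := hf (g * a) a; rwa [mul_inv_cancel_right] at this
    rw [hfg]; exact this
  have h2 : ‖η a - ξ a‖ ^ 2 ≤ 2 - 2 * (f 1).re := by
    have := norm_sub_sq_le_aux (ξ a) (η a) (hξ _) (hη _)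
    have hf1 : f 1 = inner ℂ (η a) (ξ a) := by
      have := hf a a; rwa [mul_inv_cancel] at this
    rw [hf1]
    rw [show ‖η a - ξ a‖ = ‖ξ a - η a‖ from norm_sub_rev _ _]
    exact this
  have h3 := two_two_ineq (ξ (g * a)) (η a) (ξ a)
  nlinarith
end

section
/- Let d ≥ 2, let Γ be a subgroup of SL(d, ℤ), and for each positive integer N let Γ_N = Γ ∩ ker(π_N), where π_N : SL(d, ℤ) → SL(d, ℤ/Nℤ) is entrywise reduction modulo N. Then for all positive integers m and n, with k = gcd(m, n) and l = lcm(m, n), the index in Γ of the subgroup Γ_m Γ_n generated by Γ_m and Γ_n satisfies [Γ : Γ_m Γ_n] ≤ |SL(d, ℤ/kℤ)| · [SL(d, ℤ/lℤ) : π_l(Γ)]. -/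
open Matrix Subgroup

section Aux

variable {d : ℕ}

/-- SL over a product ring is equivalent to the product of the SLs. -/
private def slProdEquiv (d : ℕ) (R S : Type) [CommRing R] [CommRing S] :
    Matrix.SpecialLinearGroup (Fin d) (R × S) ≃
      Matrix.SpecialLinearGroup (Fin d) R × Matrix.SpecialLinearGroup (Fin d) S where
  toFun g := (Matrix.SpecialLinearGroup.map (RingHom.fst R S) g,
              Matrix.SpecialLinearGroup.map (RingHom.snd R S) g)
  invFun p := ⟨Matrix.of fun i j => (p.1 i j, p.2 i j), by
      have h1 : (RingHom.fst R S) (Matrix.det (Matrix.of fun i j => ((p.1 : Matrix (Fin d) (Fin d) R) i j, (p.2 : Matrix (Fin d) (Fin d) S) i j))) = 1 := by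
        rw [RingHom.map_det]
        have : (RingHom.fst R S).mapMatrix (Matrix.of fun i j => ((p.1 : Matrix (Fin d) (Fin d) R) i j, (p.2 : Matrix (Fin d) (Fin d) S) i j)) = (p.1 : Matrix (Fin d) (Fin d) R) := by
          ext i j; rfl
        rw [this, p.1.prop]
      have h2 : (RingHom.snd R S) (Matrix.det (Matrix.of fun i j => ((p.1 : Matrix (Fin d) (Fin d) R) i j, (p.2 : Matrix (Fin d) (Fin d) S) i j))) = 1 := by
        rw [RingHom.map_det]
        have : (RingHom.snd R S).mapMatrix (Matrix.of fun i j => ((p.1 : Matrix (Fin d) (Fin d) R) i j, (p.2 : Matrix (Fin d) (Fin d) S) i j)) = (p.2 : Matrix (Fin d) (Fin d) S) := by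
          ext i j; rfl
        rw [this, p.2.prop]
      exact Prod.ext h1 h2⟩
  left_inv g := by
    apply Subtype.ext
    apply Matrix.ext
    intro i j
    exact Prod.mk.eta
  right_inv p := by
    apply Prod.ext <;> (apply Subtype.ext; apply Matrix.ext; intro i j; rfl)

private def slRingEquiv (d : ℕ) {R S : Type} [CommRing R] [CommRing S] (e : R ≃+* S) :
    Matrix.SpecialLinearGroup (Fin d) R ≃ Matrix.SpecialLinearGroup (Fin d) S where
  toFun := Matrix.SpecialLinearGroup.map e.toRingHom
  invFun := Matrix.SpecialLinearGroup.map e.symm.toRingHom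
  left_inv g := by apply Subtype.ext; apply Matrix.ext; intro i j; simp
  right_inv g := by apply Subtype.ext; apply Matrix.ext; intro i j; simp

private lemma card_sl_one (d : ℕ) : Nat.card (Matrix.SpecialLinearGroup (Fin d) (ZMod 1)) = 1 := by
  have h : ∀ y : Matrix.SpecialLinearGroup (Fin d) (ZMod 1), y = 1 := fun y =>
    Matrix.SpecialLinearGroup.ext _ _ fun i j => Subsingleton.elim _ _
  rw [Nat.card_eq_one_iff_unique]
  exact ⟨⟨fun a b => (h a).trans (h b).symm⟩, ⟨1⟩⟩

private lemma card_sl_mul (d : ℕ) {a b : ℕ} (h : Nat.Coprime a b) :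
    Nat.card (Matrix.SpecialLinearGroup (Fin d) (ZMod (a * b))) =
      Nat.card (Matrix.SpecialLinearGroup (Fin d) (ZMod a)) *
        Nat.card (Matrix.SpecialLinearGroup (Fin d) (ZMod b)) := by
  rw [Nat.card_congr ((slRingEquiv d (ZMod.chineseRemainder h)).trans
    (slProdEquiv d (ZMod a) (ZMod b))), Nat.card_prod]

private lemma card_sl_gcd_lcm (d : ℕ) {m n : ℕ} (hm : m ≠ 0) (hn : n ≠ 0) :
    Nat.card (Matrix.SpecialLinearGroup (Fin d) (ZMod (Nat.gcd m n))) *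
      Nat.card (Matrix.SpecialLinearGroup (Fin d) (ZMod (Nat.lcm m n))) =
    Nat.card (Matrix.SpecialLinearGroup (Fin d) (ZMod m)) *
      Nat.card (Matrix.SpecialLinearGroup (Fin d) (ZMod n)) := by
  set f : ArithmeticFunction ℕ :=
    ⟨fun N => if N = 0 then 0 else Nat.card (Matrix.SpecialLinearGroup (Fin d) (ZMod N)),
      if_pos rfl⟩ with hf
  have hf' : ∀ N, f N = if N = 0 then 0 else
      Nat.card (Matrix.SpecialLinearGroup (Fin d) (ZMod N)) := fun N => rfl
  have hmul : f.IsMultiplicative := by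
    constructor
    · rw [hf' 1, if_neg one_ne_zero, card_sl_one]
    · intro a b hab
      rcases eq_or_ne a 0 with ha | ha
      · subst ha; simp [hf' 0, hf']
      rcases eq_or_ne b 0 with hb | hb
      · subst hb; simp [hf' 0, hf']
      rw [hf', hf', hf', if_neg ha, if_neg hb, if_neg (Nat.mul_ne_zero ha hb)]
      exact card_sl_mul d hab
  have := hmul.lcm_apply_mul_gcd_apply (x := m) (y := n)
  rw [hf' _, hf' _, hf' _, hf' _, if_neg hm, if_neg hn,
    if_neg (Nat.lcm_ne_zero hm hn),
    if_neg (fun h => hm (Nat.eq_zero_of_gcd_eq_zero_left h))] at this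
  rw [mul_comm] at this
  exact this

private lemma mem_ker_iff (N : ℕ) (g : Matrix.SpecialLinearGroup (Fin d) ℤ) :
    g ∈ (Matrix.SpecialLinearGroup.map (n := Fin d) (Int.castRingHom (ZMod N))).ker ↔
      ∀ i j, (N : ℤ) ∣ ((1 : Matrix (Fin d) (Fin d) ℤ) i j -
        (g : Matrix (Fin d) (Fin d) ℤ) i j) := by
  rw [MonoidHom.mem_ker, Matrix.SpecialLinearGroup.ext_iff]
  apply forall_congr'; intro i
  apply forall_congr'; intro j
  have hmap : (Matrix.SpecialLinearGroup.map (n := Fin d) (Int.castRingHom (ZMod N)) g) i j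
      = (((g : Matrix (Fin d) (Fin d) ℤ) i j : ℤ) : ZMod N) := rfl
  have hone : ((1 : Matrix.SpecialLinearGroup (Fin d) (ZMod N)) i j)
      = (((1 : Matrix (Fin d) (Fin d) ℤ) i j : ℤ) : ZMod N) := by
    by_cases hij : i = j <;> simp [Matrix.one_apply, hij]
  rw [hmap, hone]
  exact (ZMod.intCast_eq_intCast_iff _ _ _).trans Int.modEq_iff_dvd

private lemma ker_lcm_eq (d m n : ℕ) :
    (Matrix.SpecialLinearGroup.map (n := Fin d) (Int.castRingHom (ZMod (Nat.lcm m n)))).ker =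
      (Matrix.SpecialLinearGroup.map (n := Fin d) (Int.castRingHom (ZMod m))).ker ⊓
        (Matrix.SpecialLinearGroup.map (n := Fin d) (Int.castRingHom (ZMod n))).ker := by
  ext g
  simp only [Subgroup.mem_inf, mem_ker_iff]
  constructor
  · intro h
    exact ⟨fun i j => dvd_trans (Int.natCast_dvd_natCast.mpr (Nat.dvd_lcm_left m n)) (h i j),
      fun i j => dvd_trans (Int.natCast_dvd_natCast.mpr (Nat.dvd_lcm_right m n)) (h i j)⟩
  · rintro ⟨h1, h2⟩ i j
    have hc : ((Nat.lcm m n : ℕ) : ℤ) = lcm (m : ℤ) (n : ℤ) := by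
      rw [← Int.coe_lcm]
      simp [Int.lcm]
    rw [hc]
    exact lcm_dvd (h1 i j) (h2 i j)

end Aux

/-- Let `d ≥ 2`, `Γ ≤ SL(d, ℤ)`, and `Γ_N = Γ ∩ ker π_N` where `π_N` is entrywise
reduction mod `N`. Then for positive `m, n`, with `k = gcd(m,n)` and `l = lcm(m,n)`,
`[Γ : Γ_m Γ_n] ≤ |SL(d, ℤ/kℤ)| · [SL(d, ℤ/lℤ) : π_l(Γ)]`. -/
theorem index_join_congruence_subgroups_le (d : ℕ) (hd : 2 ≤ d)
    (Γ : Subgroup (Matrix.SpecialLinearGroup (Fin d) ℤ))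
    (m n : ℕ) (hm : 0 < m) (hn : 0 < n) :
    ((Γ ⊓ (Matrix.SpecialLinearGroup.map (n := Fin d) (Int.castRingHom (ZMod m))).ker) ⊔
      (Γ ⊓ (Matrix.SpecialLinearGroup.map (n := Fin d) (Int.castRingHom (ZMod n))).ker)).relIndex Γ ≤
    Nat.card (Matrix.SpecialLinearGroup (Fin d) (ZMod (Nat.gcd m n))) *
      (Γ.map (Matrix.SpecialLinearGroup.map (n := Fin d)
        (Int.castRingHom (ZMod (Nat.lcm m n))))).index := by
  haveI : NeZero m := ⟨hm.ne'⟩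
  haveI : NeZero n := ⟨hn.ne'⟩
  haveI : NeZero (Nat.lcm m n) := ⟨Nat.lcm_ne_zero hm.ne' hn.ne'⟩
  set πm := Matrix.SpecialLinearGroup.map (n := Fin d) (Int.castRingHom (ZMod m)) with hπm
  set πn := Matrix.SpecialLinearGroup.map (n := Fin d) (Int.castRingHom (ZMod n)) with hπn
  set πl := Matrix.SpecialLinearGroup.map (n := Fin d)
    (Int.castRingHom (ZMod (Nat.lcm m n))) with hπl
  set Km := πm.ker
  set Kn := πn.ker
  set Kl := πl.ker
  have hker : Kl = Km ⊓ Kn := ker_lcm_eq d m n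
  have hKlm : Γ ⊓ Kl ≤ Γ ⊓ Km := inf_le_inf_left Γ (hker ▸ inf_le_left)
  have hKln : Γ ⊓ Kl ≤ Γ ⊓ Kn := inf_le_inf_left Γ (hker ▸ inf_le_right)
  have hinf : (Γ ⊓ Km) ⊓ (Γ ⊓ Kn) = Γ ⊓ Kl := by
    rw [hker]; exact (inf_inf_distrib_left Γ Km Kn).symm
  set J := (Γ ⊓ Km) ⊔ (Γ ⊓ Kn) with hJ
  have hle1 : Γ ⊓ Km ≤ J := le_sup_left
  have hle2 : Γ ⊓ Kn ≤ J := le_sup_right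
  have hJΓ : J ≤ Γ := sup_le inf_le_left inf_le_left
  -- abbreviations
  set a := (Γ ⊓ Kl).relIndex Γ with ha'
  set am := (Γ ⊓ Km).relIndex Γ
  set an := (Γ ⊓ Kn).relIndex Γ
  set b := (Γ ⊓ Kl).relIndex (Γ ⊓ Km)
  set c := (Γ ⊓ Kl).relIndex (Γ ⊓ Kn)
  set t := J.relIndex Γ
  set s := (Γ ⊓ Kl).relIndex J
  set u := (Γ ⊓ Km).relIndex J
  have hrel : ∀ (K : Subgroup (Matrix.SpecialLinearGroup (Fin d) ℤ))
      (N : ℕ) (π : _ →* Matrix.SpecialLinearGroup (Fin d) (ZMod N)), K = π.ker →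
      (Γ ⊓ K).relIndex Γ = Nat.card (Γ.map π) := by
    intro K N π hK
    rw [inf_comm, inf_relIndex_right, hK, Subgroup.relIndex_ker]
  have ha : a = Nat.card (Γ.map πl) := hrel Kl _ πl rfl
  have ham : am = Nat.card (Γ.map πm) := hrel Km _ πm rfl
  have han : an = Nat.card (Γ.map πn) := hrel Kn _ πn rfl
  have ha0 : a ≠ 0 := by rw [ha]; exact Nat.card_pos.ne'
  have hst : s * t = a := relIndex_mul_relIndex _ _ _ (le_trans hKlm hle1) hJΓ
  have hbm : b * am = a := relIndex_mul_relIndex _ _ _ hKlm inf_le_left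
  have hcn : c * an = a := relIndex_mul_relIndex _ _ _ hKln inf_le_left
  have hbu : b * u = s := relIndex_mul_relIndex _ _ _ hKlm hle1
  have hsne : s ≠ 0 := fun h => ha0 (by rw [← hst, h, zero_mul])
  have hune : u ≠ 0 := fun h => hsne (by rw [← hbu, h, mul_zero])
  have hkey : c ≤ u := by
    have hceq : c = (Γ ⊓ Km).relIndex (Γ ⊓ Kn) := by
      show (Γ ⊓ Kl).relIndex (Γ ⊓ Kn) = _
      rw [← hinf, inf_relIndex_right]
    rw [hceq]
    exact relIndex_le_of_le_right hle2 hune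
  have h1 : t * b * c ≤ a := by
    calc t * b * c ≤ t * b * u := Nat.mul_le_mul_left _ hkey
      _ = t * s := by rw [mul_assoc, hbu]
      _ = a := by rw [mul_comm, hst]
  have h2 : t * a * a = (t * b * c) * (am * an) := by
    have e : t * (b * am) * (c * an) = (t * b * c) * (am * an) := by ring
    rw [← e, hbm, hcn]
  have h4 : am * an ≤ Nat.card (Matrix.SpecialLinearGroup (Fin d) (ZMod m)) *
      Nat.card (Matrix.SpecialLinearGroup (Fin d) (ZMod n)) := by
    rw [ham, han]
    exact Nat.mul_le_mul (Subgroup.card_le_card_group (Subgroup.map πm Γ)) (Subgroup.card_le_card_group (Subgroup.map πn Γ))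
  have hcard := card_sl_gcd_lcm d hm.ne' hn.ne'
  have hidx : a * (Γ.map πl).index
      = Nat.card (Matrix.SpecialLinearGroup (Fin d) (ZMod (Nat.lcm m n))) := by
    rw [ha]; exact Subgroup.card_mul_index _
  set K := Nat.card (Matrix.SpecialLinearGroup (Fin d) (ZMod (Nat.gcd m n)))
  set idx := (Γ.map πl).index
  have hfinal : t * a * a ≤ (K * idx) * a * a := by
    calc t * a * a = (t * b * c) * (am * an) := h2
      _ ≤ a * (am * an) := Nat.mul_le_mul_right _ h1
      _ ≤ a * (Nat.card (Matrix.SpecialLinearGroup (Fin d) (ZMod m)) *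
            Nat.card (Matrix.SpecialLinearGroup (Fin d) (ZMod n))) := Nat.mul_le_mul_left _ h4
      _ = a * (K * Nat.card (Matrix.SpecialLinearGroup (Fin d) (ZMod (Nat.lcm m n)))) := by
            rw [hcard]
      _ = a * (K * (a * idx)) := by rw [hidx]
      _ = (K * idx) * a * a := by ring
  have hpos : 0 < a := Nat.pos_of_ne_zero ha0
  exact Nat.le_of_mul_le_mul_right (Nat.le_of_mul_le_mul_right hfinal hpos) hpos
end
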